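/- For the Kähler AR(2) geometry, ψ₃ = (1 − ξ¹ξ̄²)(1 − ξ²ξ̄¹)(1 − |ξ¹|²)(1 − |ξ²|²) satisfies Δψ₃ = −6·ψ₃, hence ψ₃ is a positive superharmonic function (an eigenfunction of the Laplace–Beltrami operator). -/

import Mathlib

/-- Holomorphic partial derivative `∂_i F` in the `i`-th complex coordinate. -/
noncomputable def pd {n : ℕ} (F : (Fin n → ℂ) → ℂ) (i : Fin n) (ξ : Fin n → ℂ) : ℂ :=
  deriv (fun t => F (Function.update ξ i t)) (ξ i)

/-- Componentwise complex conjugation of a coordinate vector. -/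
def conjVec {n : ℕ} (ζ : Fin n → ℂ) : Fin n → ℂ := fun m => starRingEnd ℂ (ζ m)

/-- The mixed Wirtinger Hessian `∂_i ∂_{¯j} ψ` of a function given in the polarized form
`ψc ξ ζ` (holomorphic in `ξ` and in `ζ`), evaluated at `ζ = conj ξ`. -/
noncomputable def mixedHess {n : ℕ} (ψc : (Fin n → ℂ) → (Fin n → ℂ) → ℂ)
    (ξ : Fin n → ℂ) (i j : Fin n) : ℂ :=
  pd (fun ξ' => pd (ψc ξ') j (conjVec ξ)) i ξ

/-- The AR metric `g_{i¯j} = 1/(1 − ξ^i conj(ξ^j))`. -/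
noncomputable def arMetric {n : ℕ} (ξ : Fin n → ℂ) : Matrix (Fin n) (Fin n) ℂ :=
  Matrix.of fun i j => 1 / (1 - ξ i * starRingEnd ℂ (ξ j))

/-- The Kähler Laplace–Beltrami operator `Δψ = 2 g^{i¯j} ∂_i ∂_{¯j} ψ`, with
`g^{i¯j} = (g⁻¹)_{ji}`. -/
noncomputable def kahlerLap {n : ℕ} (ψc : (Fin n → ℂ) → (Fin n → ℂ) → ℂ)
    (ξ : Fin n → ℂ) : ℂ :=
  2 * ∑ i, ∑ j, (arMetric ξ)⁻¹ j i * mixedHess ψc ξ i j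


lemma deriv_quad (p q r t : ℂ) : deriv (fun s => p + q*s + r*s^2) t = q + 2*r*t := by
  have h : HasDerivAt (fun s : ℂ => p + q*s + r*s^2) (0 + q*1 + r*(2*t^1)) t :=
    ((hasDerivAt_const t p).add ((hasDerivAt_id t).const_mul q)).add
      (by simpa using (hasDerivAt_pow 2 t).const_mul r)
  rw [h.deriv]; ring

set_option maxHeartbeats 1000000 in
/-- For the Kähler AR(2) geometry,
`ψ₃ = (1 − ξ¹ξ̄²)(1 − ξ²ξ̄¹)(1 − |ξ¹|²)(1 − |ξ²|²)` satisfies `Δψ₃ = −6ψ₃`, hence `ψ₃`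
is a positive superharmonic eigenfunction of the Laplace–Beltrami operator. -/
theorem stmt18 (ξ : Fin 2 → ℂ) (h0 : ‖ξ 0‖ < 1) (h1 : ‖ξ 1‖ < 1) (hne : ξ 0 ≠ ξ 1) :
    kahlerLap
        (fun ξ' ζ => (1 - ξ' 0 * ζ 1) * (1 - ξ' 1 * ζ 0) * (1 - ξ' 0 * ζ 0) * (1 - ξ' 1 * ζ 1))
        ξ
      = -6 * ((1 - ξ 0 * starRingEnd ℂ (ξ 1)) * (1 - ξ 1 * starRingEnd ℂ (ξ 0))
          * (1 - ξ 0 * starRingEnd ℂ (ξ 0)) * (1 - ξ 1 * starRingEnd ℂ (ξ 1)))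
      ∧ 0 < ((1 - ξ 0 * starRingEnd ℂ (ξ 1)) * (1 - ξ 1 * starRingEnd ℂ (ξ 0))
          * (1 - ξ 0 * starRingEnd ℂ (ξ 0)) * (1 - ξ 1 * starRingEnd ℂ (ξ 1))).re
      ∧ ((1 - ξ 0 * starRingEnd ℂ (ξ 1)) * (1 - ξ 1 * starRingEnd ℂ (ξ 0))
          * (1 - ξ 0 * starRingEnd ℂ (ξ 0)) * (1 - ξ 1 * starRingEnd ℂ (ξ 1))).im = 0 := by
  set a := ξ 0 with ha
  set b := ξ 1 with hb
  set A := starRingEnd ℂ (ξ 0) with hA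
  set B := starRingEnd ℂ (ξ 1) with hB
  have hnA : ‖A‖ = ‖a‖ := RCLike.norm_conj _
  have hnB : ‖B‖ = ‖b‖ := RCLike.norm_conj _
  have key : ∀ z w : ℂ, ‖z‖ < 1 → ‖w‖ < 1 → 1 - z * w ≠ 0 := by
    intro z w hz hw h
    have h' : (1:ℂ) = z * w := by rwa [sub_eq_zero] at h
    have : ‖z * w‖ < 1 := by
      rw [norm_mul]
      nlinarith [norm_nonneg z, norm_nonneg w]
    rw [← h'] at this; simp at this
  have haA : 1 - a * A ≠ 0 := key a A h0 (by rw [hnA]; exact h0)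
  have hbB : 1 - b * B ≠ 0 := key b B h1 (by rw [hnB]; exact h1)
  have haB : 1 - a * B ≠ 0 := key a B h0 (by rw [hnB]; exact h1)
  have hbA : 1 - b * A ≠ 0 := key b A h1 (by rw [hnA]; exact h0)
  have hab : a - b ≠ 0 := sub_ne_zero.mpr hne
  have hAB : A - B ≠ 0 := by
    rw [sub_ne_zero]
    intro h
    exact hne (by simpa [hA, hB] using congrArg (starRingEnd ℂ) h)
  -- inner derivatives
  have hinner0 : ∀ x : Fin 2 → ℂ,
      pd (fun ζ => (1 - x 0 * ζ 1) * (1 - x 1 * ζ 0) * (1 - x 0 * ζ 0) * (1 - x 1 * ζ 1)) 0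
        (conjVec ξ)
      = (1 - x 0 * B) * (1 - x 1 * B) * (2 * x 0 * x 1 * A - x 0 - x 1) := by
    intro x
    have h : (fun t => (1 - x 0 * Function.update (conjVec ξ) 0 t 1)
          * (1 - x 1 * Function.update (conjVec ξ) 0 t 0)
          * (1 - x 0 * Function.update (conjVec ξ) 0 t 0)
          * (1 - x 1 * Function.update (conjVec ξ) 0 t 1))
        = fun t => ((1 - x 0 * B) * (1 - x 1 * B))
          + ((1 - x 0 * B) * (1 - x 1 * B) * (-(x 0 + x 1))) * t
          + ((1 - x 0 * B) * (1 - x 1 * B) * (x 0 * x 1)) * t^2 := by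
      funext t
      simp only [Function.update_self, Function.update_of_ne (by decide : (1:Fin 2) ≠ 0),
        conjVec, ← hB]
      ring
    show deriv _ (conjVec ξ 0) = _
    rw [h, deriv_quad]
    simp only [conjVec, ← hA]
    ring
  have hinner1 : ∀ x : Fin 2 → ℂ,
      pd (fun ζ => (1 - x 0 * ζ 1) * (1 - x 1 * ζ 0) * (1 - x 0 * ζ 0) * (1 - x 1 * ζ 1)) 1
        (conjVec ξ)
      = (1 - x 0 * A) * (1 - x 1 * A) * (2 * x 0 * x 1 * B - x 0 - x 1) := by
    intro x
    have h : (fun t => (1 - x 0 * Function.update (conjVec ξ) 1 t 1)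
          * (1 - x 1 * Function.update (conjVec ξ) 1 t 0)
          * (1 - x 0 * Function.update (conjVec ξ) 1 t 0)
          * (1 - x 1 * Function.update (conjVec ξ) 1 t 1))
        = fun t => ((1 - x 0 * A) * (1 - x 1 * A))
          + ((1 - x 0 * A) * (1 - x 1 * A) * (-(x 0 + x 1))) * t
          + ((1 - x 0 * A) * (1 - x 1 * A) * (x 0 * x 1)) * t^2 := by
      funext t
      simp only [Function.update_self, Function.update_of_ne (by decide : (0:Fin 2) ≠ 1),
        conjVec, ← hA]
      ring
    show deriv _ (conjVec ξ 1) = _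
    rw [h, deriv_quad]
    simp only [conjVec, ← hB]
    ring
  set ψc : (Fin 2 → ℂ) → (Fin 2 → ℂ) → ℂ :=
    fun ξ' ζ => (1 - ξ' 0 * ζ 1) * (1 - ξ' 1 * ζ 0) * (1 - ξ' 0 * ζ 0) * (1 - ξ' 1 * ζ 1)
    with hψ
  have H00 : mixedHess ψc ξ 0 0
      = -B * (1 - b*B) * (2*a*b*A - a - b) + (1 - a*B) * (1 - b*B) * (2*b*A - 1) := by
    show deriv (fun t => pd (ψc (Function.update ξ 0 t)) 0 (conjVec ξ)) (ξ 0) = _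
    simp only [hψ, hinner0]
    have h : (fun t => (1 - Function.update ξ 0 t 0 * B) * (1 - Function.update ξ 0 t 1 * B)
          * (2 * Function.update ξ 0 t 0 * Function.update ξ 0 t 1 * A
            - Function.update ξ 0 t 0 - Function.update ξ 0 t 1))
        = fun t => (-(b) * (1 - b*B))
          + ((1 - b*B) * (2*b*A - 1 + b*B)) * t
          + ((1 - b*B) * (B - 2*b*A*B)) * t^2 := by
      funext t
      simp only [Function.update_self, Function.update_of_ne (by decide : (1:Fin 2) ≠ 0), ← hb]
      ring
    rw [h, deriv_quad, ← ha]
    ring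
  have H10 : mixedHess ψc ξ 1 0
      = -B * (1 - a*B) * (2*a*b*A - a - b) + (1 - a*B) * (1 - b*B) * (2*a*A - 1) := by
    show deriv (fun t => pd (ψc (Function.update ξ 1 t)) 0 (conjVec ξ)) (ξ 1) = _
    simp only [hψ, hinner0]
    have h : (fun t => (1 - Function.update ξ 1 t 0 * B) * (1 - Function.update ξ 1 t 1 * B)
          * (2 * Function.update ξ 1 t 0 * Function.update ξ 1 t 1 * A
            - Function.update ξ 1 t 0 - Function.update ξ 1 t 1))
        = fun t => (-(a) * (1 - a*B))
          + ((1 - a*B) * (2*a*A - 1 + a*B)) * t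
          + ((1 - a*B) * (B - 2*a*A*B)) * t^2 := by
      funext t
      simp only [Function.update_self, Function.update_of_ne (by decide : (0:Fin 2) ≠ 1), ← ha]
      ring
    rw [h, deriv_quad, ← hb]
    ring
  have H01 : mixedHess ψc ξ 0 1
      = -A * (1 - b*A) * (2*a*b*B - a - b) + (1 - a*A) * (1 - b*A) * (2*b*B - 1) := by
    show deriv (fun t => pd (ψc (Function.update ξ 0 t)) 1 (conjVec ξ)) (ξ 0) = _
    simp only [hψ, hinner1]
    have h : (fun t => (1 - Function.update ξ 0 t 0 * A) * (1 - Function.update ξ 0 t 1 * A)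
          * (2 * Function.update ξ 0 t 0 * Function.update ξ 0 t 1 * B
            - Function.update ξ 0 t 0 - Function.update ξ 0 t 1))
        = fun t => (-(b) * (1 - b*A))
          + ((1 - b*A) * (2*b*B - 1 + b*A)) * t
          + ((1 - b*A) * (A - 2*b*A*B)) * t^2 := by
      funext t
      simp only [Function.update_self, Function.update_of_ne (by decide : (1:Fin 2) ≠ 0), ← hb]
      ring
    rw [h, deriv_quad, ← ha]
    ring
  have H11 : mixedHess ψc ξ 1 1
      = -A * (1 - a*A) * (2*a*b*B - a - b) + (1 - a*A) * (1 - b*A) * (2*a*B - 1) := by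
    show deriv (fun t => pd (ψc (Function.update ξ 1 t)) 1 (conjVec ξ)) (ξ 1) = _
    simp only [hψ, hinner1]
    have h : (fun t => (1 - Function.update ξ 1 t 0 * A) * (1 - Function.update ξ 1 t 1 * A)
          * (2 * Function.update ξ 1 t 0 * Function.update ξ 1 t 1 * B
            - Function.update ξ 1 t 0 - Function.update ξ 1 t 1))
        = fun t => (-(a) * (1 - a*A))
          + ((1 - a*A) * (2*a*B - 1 + a*A)) * t
          + ((1 - a*A) * (A - 2*a*A*B)) * t^2 := by
      funext t
      simp only [Function.update_self, Function.update_of_ne (by decide : (0:Fin 2) ≠ 1), ← ha]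
      ring
    rw [h, deriv_quad, ← hb]
    ring
  -- metric determinant and inverse
  have hd : (arMetric ξ).det
      = (a - b) * (A - B) / ((1 - a*A) * (1 - b*B) * (1 - a*B) * (1 - b*A)) := by
    rw [Matrix.det_fin_two]
    simp only [arMetric, Matrix.of_apply, Matrix.cons_val_zero, Matrix.cons_val_one,
      Matrix.head_cons]
    simp only [← hA, ← hB]
    simp only [← ha, ← hb]
    have : 1 - A * b ≠ 0 := by rwa [mul_comm A b]
    field_simp
    ring
  have hdne : (arMetric ξ).det ≠ 0 := by
    rw [hd]
    exact div_ne_zero (mul_ne_zero hab hAB)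
      (mul_ne_zero (mul_ne_zero (mul_ne_zero haA hbB) haB) hbA)
  have hinvE : (arMetric ξ)⁻¹ = ((arMetric ξ).det)⁻¹ •
      !![arMetric ξ 1 1, -(arMetric ξ 0 1); -(arMetric ξ 1 0), arMetric ξ 0 0] := by
    rw [Matrix.inv_def, Ring.inverse_eq_inv', Matrix.adjugate_fin_two]
  have hdi : ((arMetric ξ).det)⁻¹
      = (1 - a*A) * (1 - b*B) * (1 - a*B) * (1 - b*A) / ((a - b) * (A - B)) := by
    rw [hd, inv_div]
  have hN : (a - b) * (A - B) ≠ 0 := mul_ne_zero hab hAB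
  have hI00 : (arMetric ξ)⁻¹ 0 0 = (1 - a*A) * (1 - a*B) * (1 - b*A) / ((a - b) * (A - B)) := by
    rw [hinvE]
    simp only [Matrix.smul_apply, smul_eq_mul, Matrix.cons_val', Matrix.cons_val_zero,
      Matrix.empty_val', Matrix.cons_val_fin_one, Matrix.cons_val_one, Matrix.head_cons,
      Matrix.head_fin_const]
    rw [hdi]
    simp only [arMetric, Matrix.of_apply, Matrix.cons_val_zero, Matrix.cons_val_one,
      Matrix.head_cons]
    simp only [← hA, ← hB]
    simp only [← ha, ← hb]
    field_simp
  have hI10 : (arMetric ξ)⁻¹ 1 0 = -((1 - a*A) * (1 - b*B) * (1 - a*B)) / ((a - b) * (A - B)) := by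
    rw [hinvE]
    simp only [Matrix.smul_apply, smul_eq_mul, Matrix.cons_val', Matrix.cons_val_zero,
      Matrix.empty_val', Matrix.cons_val_fin_one, Matrix.cons_val_one, Matrix.head_cons,
      Matrix.head_fin_const]
    rw [hdi]
    simp only [arMetric, Matrix.of_apply, Matrix.cons_val_zero, Matrix.cons_val_one,
      Matrix.head_cons]
    simp only [← hA, ← hB]
    simp only [← ha, ← hb]
    have : 1 - A * b ≠ 0 := by rwa [mul_comm A b]
    field_simp
  have hI01 : (arMetric ξ)⁻¹ 0 1 = -((1 - a*A) * (1 - b*B) * (1 - b*A)) / ((a - b) * (A - B)) := by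
    rw [hinvE]
    simp only [Matrix.smul_apply, smul_eq_mul, Matrix.cons_val', Matrix.cons_val_zero,
      Matrix.empty_val', Matrix.cons_val_fin_one, Matrix.cons_val_one, Matrix.head_cons,
      Matrix.head_fin_const]
    rw [hdi]
    simp only [arMetric, Matrix.of_apply, Matrix.cons_val_zero, Matrix.cons_val_one,
      Matrix.head_cons]
    simp only [← hA, ← hB]
    simp only [← ha, ← hb]
    field_simp
  have hI11 : (arMetric ξ)⁻¹ 1 1 = (1 - b*B) * (1 - a*B) * (1 - b*A) / ((a - b) * (A - B)) := by
    rw [hinvE]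
    simp only [Matrix.smul_apply, smul_eq_mul, Matrix.cons_val', Matrix.cons_val_zero,
      Matrix.empty_val', Matrix.cons_val_fin_one, Matrix.cons_val_one, Matrix.head_cons,
      Matrix.head_fin_const]
    rw [hdi]
    simp only [arMetric, Matrix.of_apply, Matrix.cons_val_zero, Matrix.cons_val_one,
      Matrix.head_cons]
    simp only [← hA, ← hB]
    simp only [← ha, ← hb]
    field_simp
  have hconj : (1 - b * A) = starRingEnd ℂ (1 - a * B) := by
    simp [hA, hB, ← ha, ← hb, mul_comm]
  have hrepr : (1 - a * B) * (1 - b * A) * (1 - a * A) * (1 - b * B)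
      = ((Complex.normSq (1 - a * B) * (1 - Complex.normSq a) * (1 - Complex.normSq b) : ℝ) : ℂ) := by
    rw [hconj]
    have e1 : (1 - a * B) * starRingEnd ℂ (1 - a * B)
        = ((Complex.normSq (1 - a * B) : ℝ) : ℂ) := Complex.mul_conj _
    have e2 : (1 : ℂ) - a * A = ((1 - Complex.normSq a : ℝ) : ℂ) := by
      rw [hA, ← ha]
      push_cast
      rw [Complex.mul_conj]
    have e3 : (1 : ℂ) - b * B = ((1 - Complex.normSq b : ℝ) : ℂ) := by
      rw [hB, ← hb]
      push_cast
      rw [Complex.mul_conj]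
    rw [e1, e2, e3]
    push_cast
    ring
  have hpos : 0 < Complex.normSq (1 - a * B) * (1 - Complex.normSq a) * (1 - Complex.normSq b) := by
    have p1 : 0 < Complex.normSq (1 - a * B) := Complex.normSq_pos.mpr haB
    have p2 : Complex.normSq a < 1 := by
      have h := Complex.normSq_eq_norm_sq a
      nlinarith [norm_nonneg a]
    have p3 : Complex.normSq b < 1 := by
      have h := Complex.normSq_eq_norm_sq b
      nlinarith [norm_nonneg b]
    exact mul_pos (mul_pos p1 (by linarith)) (by linarith)
  refine ⟨?_, ?_, ?_⟩
  · show 2 * ∑ i, ∑ j, (arMetric ξ)⁻¹ j i * mixedHess ψc ξ i j = _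
    rw [Fin.sum_univ_two, Fin.sum_univ_two, Fin.sum_univ_two]
    rw [hI00, hI10, hI01, hI11, H00, H01, H10, H11]
    rw [div_mul_eq_mul_div, div_mul_eq_mul_div, div_mul_eq_mul_div, div_mul_eq_mul_div,
      ← add_div, ← add_div, ← add_div]
    rw [mul_div_assoc', div_eq_iff hN]
    ring
  · rw [hrepr]
    simpa using hpos
  · rw [hrepr]
    simp
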